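/- A permutation w ∈ S_n is vexillary (2143-avoiding: there exist no i < j < k < ℓ with w_j < w_i < w_ℓ < w_k) if and only if there are no two elements (p,q) and (p',q') in the essential set ess(w) with p < p' and q < q'. -/
import Mathlib


/-- `(i,j)` lies in the Rothe diagram `D(w)`: `w i > j` and `w⁻¹ j > i`. -/
def InRothe {n : ℕ} (w : Equiv.Perm (Fin n)) (i j : Fin n) : Prop :=
  j < w i ∧ i < w.symm j

/-- `(p,q)` lies in the essential set `ess(w)`: it is in `D(w)` and neither `(p,q+1)`
nor `(p+1,q)` is in `D(w)`. -/
def InEss {n : ℕ} (w : Equiv.Perm (Fin n)) (p q : Fin n) : Prop :=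
  InRothe w p q ∧ (∀ q' : Fin n, (q' : ℕ) = (q : ℕ) + 1 → ¬ InRothe w p q') ∧
    ∀ p' : Fin n, (p' : ℕ) = (p : ℕ) + 1 → ¬ InRothe w p' q

/-- `w` is vexillary, i.e. 2143-avoiding. -/
def Vexillary {n : ℕ} (w : Equiv.Perm (Fin n)) : Prop :=
  ¬ ∃ i j k l : Fin n, i < j ∧ j < k ∧ k < l ∧ w j < w i ∧ w i < w l ∧ w l < w k

namespace Stmt14

open Finset

variable {n : ℕ} (w : Equiv.Perm (Fin n))

lemma inRothe_iff (a b : Fin n) : InRothe w a b ↔ (b < w a ∧ a < w.symm b) := Iff.rfl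

lemma inEss_iff (p q : Fin n) : InEss w p q ↔
    (InRothe w p q ∧ (∀ q' : Fin n, (q' : ℕ) = (q : ℕ) + 1 → ¬ InRothe w p q') ∧
      ∀ p' : Fin n, (p' : ℕ) = (p : ℕ) + 1 → ¬ InRothe w p' q) := Iff.rfl

/-- Walking southeast from any box of the Rothe diagram reaches an essential box. -/
lemma walk_aux : ∀ m : ℕ, ∀ a b : Fin n, (n - (a : ℕ)) + (n - (b : ℕ)) ≤ m → InRothe w a b →
    ∃ p q : Fin n, InEss w p q ∧ a ≤ p ∧ b ≤ q := by
  intro m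
  induction m with
  | zero =>
    intro a b hm _
    exfalso
    have ha := a.isLt
    omega
  | succ m ih =>
    intro a b hm h
    have ha := a.isLt
    have hb := b.isLt
    by_cases hc2 : ∀ q' : Fin n, (q' : ℕ) = (b : ℕ) + 1 → ¬ InRothe w a q'
    · by_cases hc3 : ∀ p' : Fin n, (p' : ℕ) = (a : ℕ) + 1 → ¬ InRothe w p' b
      · exact ⟨a, b, (inEss_iff w a b).mpr ⟨h, hc2, hc3⟩, le_refl _, le_refl _⟩
      · push_neg at hc3
        obtain ⟨x, hx, hxR⟩ := hc3
        obtain ⟨p, q, hpq, hap, hbq⟩ := ih x b (by omega) hxR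
        refine ⟨p, q, hpq, le_trans ?_ hap, hbq⟩
        rw [Fin.le_def]
        omega
    · push_neg at hc2
      obtain ⟨z, hz, hzR⟩ := hc2
      obtain ⟨p, q, hpq, hap, hbq⟩ := ih a z (by omega) hzR
      refine ⟨p, q, hpq, hap, le_trans ?_ hbq⟩
      rw [Fin.le_def]
      omega

/-- A 2143 pattern yields a southeast pair of essential boxes. -/
lemma pattern_to_pair (i j k l : Fin n) (hij : i < j) (hjk : j < k) (hkl : k < l)
    (h1 : w j < w i) (h2 : w i < w l) (h3 : w l < w k) :
    ∃ p q p' q' : Fin n, InEss w p q ∧ InEss w p' q' ∧ p < p' ∧ q < q' := by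
  classical
  set A : Finset (Fin n) := univ.filter (fun z => w j ≤ z ∧ z < w i ∧ i < w.symm z) with hA
  have hwjA : w j ∈ A := by
    simp only [hA, mem_filter, mem_univ, true_and]
    refine ⟨le_refl _, h1, ?_⟩
    rw [Equiv.symm_apply_apply]
    exact hij
  have hAne : A.Nonempty := ⟨w j, hwjA⟩
  set qt : Fin n := A.max' hAne with hqt
  have hqtA : qt ∈ A := by rw [hqt]; exact A.max'_mem hAne
  simp only [hA, mem_filter, mem_univ, true_and] at hqtA
  obtain ⟨hq1, hq2, hq3⟩ := hqtA
  -- the column just right of qt has its dot in row ≤ i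
  have Q1 : ∀ z : Fin n, (z : ℕ) = (qt : ℕ) + 1 → w.symm z ≤ i := by
    intro z hz
    rcases lt_trichotomy z (w i) with hlt | heq | hgt
    · by_contra hcon
      push_neg at hcon
      have hzA : z ∈ A := by
        simp only [hA, mem_filter, mem_univ, true_and]
        refine ⟨?_, hlt, hcon⟩
        rw [Fin.le_def] at hq1 ⊢
        omega
      have hle := A.le_max' z hzA
      rw [← hqt, Fin.le_def] at hle
      omega
    · rw [heq, Equiv.symm_apply_apply]
    · exfalso
      rw [Fin.lt_def] at hgt hq2
      omega
  set B : Finset (Fin n) := univ.filter (fun x => i ≤ x ∧ x < w.symm qt ∧ qt < w x) with hB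
  have hiB : i ∈ B := by
    simp only [hB, mem_filter, mem_univ, true_and]
    exact ⟨le_refl _, hq3, hq2⟩
  set R : Finset (Fin n) := univ.filter (fun x => ∀ y : Fin n, i ≤ y → y ≤ x → y ∈ B) with hR
  have hiR : i ∈ R := by
    simp only [hR, mem_filter, mem_univ, true_and]
    intro y h1y h2y
    have hy : y = i := le_antisymm h2y h1y
    rwa [hy]
  have hRne : R.Nonempty := ⟨i, hiR⟩
  set pt : Fin n := R.max' hRne with hpt
  have hptR : pt ∈ R := by rw [hpt]; exact R.max'_mem hRne
  simp only [hR, mem_filter, mem_univ, true_and] at hptR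
  have hipt : i ≤ pt := by
    have hle := R.le_max' i hiR
    rwa [← hpt] at hle
  have hptB : pt ∈ B := hptR pt hipt (le_refl _)
  simp only [hB, mem_filter, mem_univ, true_and] at hptB
  obtain ⟨-, hp2, hp3⟩ := hptB
  have hptj : pt < j := by
    by_contra hcon
    push_neg at hcon
    have hjB := hptR j (le_of_lt hij) hcon
    simp only [hB, mem_filter, mem_univ, true_and] at hjB
    exact absurd hjB.2.2 (not_lt.mpr hq1)
  have hsucc : ∀ x : Fin n, (x : ℕ) = (pt : ℕ) + 1 → x ∉ B := by
    intro x hx hxB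
    have hxR : x ∈ R := by
      simp only [hR, mem_filter, mem_univ, true_and]
      intro y h1y h2y
      rcases lt_or_eq_of_le h2y with hlt | heq
      · refine hptR y h1y ?_
        rw [Fin.lt_def] at hlt
        rw [Fin.le_def]
        omega
      · rwa [heq]
    have hle := R.le_max' x hxR
    rw [← hpt, Fin.le_def] at hle
    omega
  have hEss1 : InEss w pt qt := by
    rw [inEss_iff]
    refine ⟨(inRothe_iff w pt qt).mpr ⟨hp3, hp2⟩, ?_, ?_⟩
    · intro z hz hzR
      rw [inRothe_iff] at hzR
      have hQ := Q1 z hz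
      have h2' := hzR.2
      rw [Fin.le_def] at hQ hipt
      rw [Fin.lt_def] at h2'
      omega
    · intro x hx hxR
      rw [inRothe_iff] at hxR
      refine hsucc x hx ?_
      simp only [hB, mem_filter, mem_univ, true_and]
      refine ⟨?_, hxR.2, hxR.1⟩
      rw [Fin.le_def] at hipt ⊢
      omega
  have hkR : InRothe w k (w l) := by
    rw [inRothe_iff]
    refine ⟨h3, ?_⟩
    rw [Equiv.symm_apply_apply]
    exact hkl
  obtain ⟨p', q', hEss2, hkp', hlq'⟩ :=
    walk_aux w ((n - (k : ℕ)) + (n - ((w l : Fin n) : ℕ))) k (w l) (le_refl _) hkR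
  refine ⟨pt, qt, p', q', hEss1, hEss2, ?_, ?_⟩
  · rw [Fin.lt_def] at hptj hjk ⊢
    rw [Fin.le_def] at hkp'
    omega
  · rw [Fin.lt_def] at hq2 h2 ⊢
    rw [Fin.le_def] at hlq'
    omega

/-- A southeast pair of essential boxes yields a 2143 pattern. -/
lemma pair_to_pattern (p q p' q' : Fin n) (h1 : InEss w p q) (h2 : InEss w p' q')
    (hpp : p < p') (hqq : q < q') :
    ∃ i j k l : Fin n, i < j ∧ j < k ∧ k < l ∧ w j < w i ∧ w i < w l ∧ w l < w k := by
  rw [inEss_iff] at h1 h2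
  obtain ⟨hr1, hc2, hc3⟩ := h1
  obtain ⟨hr2, -, -⟩ := h2
  rw [inRothe_iff] at hr1 hr2
  obtain ⟨hpq1, hpq2⟩ := hr1   -- q < w p, p < w.symm q
  obtain ⟨hP1, hP2⟩ := hr2     -- q' < w p', p' < w.symm q'
  by_cases hBc : w.symm q < p'
  · by_cases hA : w p < q'
    · -- Case 1
      refine ⟨p, w.symm q, p', w.symm q', hpq2, hBc, hP2, ?_, ?_, ?_⟩
      · rw [Equiv.apply_symm_apply]; exact hpq1
      · rw [Equiv.apply_symm_apply]; exact hA
      · rw [Equiv.apply_symm_apply]; exact hP1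
    · -- Case 2a : q' ≤ w p
      push_neg at hA
      have hq'wp : q' < w p := by
        rcases lt_or_eq_of_le hA with h | h
        · exact h
        · exfalso
          have hs : w.symm q' = p := by rw [h, Equiv.symm_apply_apply]
          rw [hs] at hP2
          rw [Fin.lt_def] at hP2 hpp
          omega
      have hq1n : (q : ℕ) + 1 < n := by
        have hlt := (w p).isLt
        rw [Fin.lt_def] at hpq1
        omega
      set z : Fin n := ⟨(q : ℕ) + 1, hq1n⟩ with hzdef
      have hzval : (z : ℕ) = (q : ℕ) + 1 := rfl
      have hzwp : z < w p := by
        rw [Fin.lt_def] at hq'wp hqq ⊢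
        rw [hzval]
        omega
      have hno := hc2 z rfl
      have hsymz : w.symm z ≤ p := by
        by_contra hcon
        push_neg at hcon
        exact hno ((inRothe_iff w p z).mpr ⟨hzwp, hcon⟩)
      have hwr : w (w.symm z) = z := Equiv.apply_symm_apply w z
      have hrp : w.symm z < p := by
        rcases lt_or_eq_of_le hsymz with h | h
        · exact h
        · exfalso
          have hwp : w p = z := by rw [← h, hwr]
          have hval : ((w p : Fin n) : ℕ) = (q : ℕ) + 1 := by rw [hwp]
          rw [Fin.lt_def] at hq'wp hqq
          omega
      have hzq' : z < q' := by
        rw [Fin.lt_def]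
        rcases lt_or_eq_of_le (show (z : ℕ) ≤ (q' : ℕ) by
            rw [Fin.lt_def] at hqq; rw [hzval]; omega) with h | h
        · exact h
        · exfalso
          have hzq : z = q' := Fin.ext h
          have h5 : p' < w.symm z := by rw [hzq]; exact hP2
          rw [Fin.lt_def] at h5 hrp hpp
          omega
      refine ⟨w.symm z, w.symm q, p', w.symm q', ?_, hBc, hP2, ?_, ?_, ?_⟩
      · rw [Fin.lt_def] at hrp hpq2 ⊢
        omega
      · rw [Equiv.apply_symm_apply, hwr, Fin.lt_def, hzval]
        omega
      · simp only [Equiv.apply_symm_apply]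
        exact hzq'
      · rw [Equiv.apply_symm_apply]
        exact hP1
  · -- p' ≤ w.symm q : derive the box (p+1, ·) facts
    push_neg at hBc
    have hsq := (w.symm q).isLt
    have hp1n : (p : ℕ) + 1 < n := by
      rw [Fin.lt_def] at hpq2
      omega
    set x : Fin n := ⟨(p : ℕ) + 1, hp1n⟩ with hxdef
    have hxval : (x : ℕ) = (p : ℕ) + 1 := rfl
    have hxsq : x < w.symm q := by
      rw [Fin.lt_def]
      rcases lt_or_eq_of_le (show (x : ℕ) ≤ ((w.symm q : Fin n) : ℕ) by
          rw [Fin.le_def] at hBc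
          rw [Fin.lt_def] at hpp
          rw [hxval]
          omega) with hlt | heq
      · exact hlt
      · exfalso
        have hxeq : w.symm q = x := Fin.ext heq.symm
        have hwx : w x = q := by rw [← hxeq, Equiv.apply_symm_apply]
        have hp'x : p' = x := by
          apply Fin.ext
          rw [Fin.le_def, hxeq] at hBc
          rw [Fin.lt_def] at hpp
          rw [hxval] at hBc ⊢
          omega
        rw [hp'x, hwx] at hP1
        rw [Fin.lt_def] at hP1 hqq
        omega
    have hno := hc3 x rfl
    have hwxle : w x ≤ q := by
      by_contra hcon
      push_neg at hcon
      exact hno ((inRothe_iff w x q).mpr ⟨hcon, hxsq⟩)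
    have hxp' : x < p' := by
      rw [Fin.lt_def]
      by_contra hcon
      push_neg at hcon
      have hpx : p' = x := by
        apply Fin.ext
        rw [Fin.lt_def] at hpp
        rw [hxval] at hcon ⊢
        omega
      rw [hpx] at hP1
      rw [Fin.lt_def] at hP1 hqq
      rw [Fin.le_def] at hwxle
      omega
    by_cases hA : w p < q'
    · -- Case 3
      refine ⟨p, x, p', w.symm q', ?_, hxp', hP2, ?_, ?_, ?_⟩
      · rw [Fin.lt_def, hxval]
        omega
      · exact lt_of_le_of_lt hwxle hpq1
      · rw [Equiv.apply_symm_apply]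
        exact hA
      · rw [Equiv.apply_symm_apply]
        exact hP1
    · -- Case 2b
      push_neg at hA
      have hq'wp : q' < w p := by
        rcases lt_or_eq_of_le hA with h | h
        · exact h
        · exfalso
          have hs : w.symm q' = p := by rw [h, Equiv.symm_apply_apply]
          rw [hs] at hP2
          rw [Fin.lt_def] at hP2 hpp
          omega
      have hq1n : (q : ℕ) + 1 < n := by
        have hlt := (w p).isLt
        rw [Fin.lt_def] at hpq1
        omega
      set z : Fin n := ⟨(q : ℕ) + 1, hq1n⟩ with hzdef
      have hzval : (z : ℕ) = (q : ℕ) + 1 := rfl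
      have hzwp : z < w p := by
        rw [Fin.lt_def] at hq'wp hqq ⊢
        rw [hzval]
        omega
      have hno2 := hc2 z rfl
      have hsymz : w.symm z ≤ p := by
        by_contra hcon
        push_neg at hcon
        exact hno2 ((inRothe_iff w p z).mpr ⟨hzwp, hcon⟩)
      have hwr : w (w.symm z) = z := Equiv.apply_symm_apply w z
      have hrp : w.symm z < p := by
        rcases lt_or_eq_of_le hsymz with h | h
        · exact h
        · exfalso
          have hwp : w p = z := by rw [← h, hwr]
          have hval : ((w p : Fin n) : ℕ) = (q : ℕ) + 1 := by rw [hwp]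
          rw [Fin.lt_def] at hq'wp hqq
          omega
      have hzq' : z < q' := by
        rw [Fin.lt_def]
        rcases lt_or_eq_of_le (show (z : ℕ) ≤ (q' : ℕ) by
            rw [Fin.lt_def] at hqq; rw [hzval]; omega) with h | h
        · exact h
        · exfalso
          have hzq : z = q' := Fin.ext h
          have h5 : p' < w.symm z := by rw [hzq]; exact hP2
          rw [Fin.lt_def] at h5 hrp hpp
          omega
      refine ⟨w.symm z, x, p', w.symm q', ?_, hxp', hP2, ?_, ?_, ?_⟩
      · rw [Fin.lt_def] at hrp ⊢
        rw [hxval]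
        omega
      · rw [hwr, Fin.lt_def, hzval]
        rw [Fin.le_def] at hwxle
        omega
      · simp only [Equiv.apply_symm_apply]
        exact hzq'
      · rw [Equiv.apply_symm_apply]
        exact hP1

end Stmt14

theorem stmt_14 (n : ℕ) (w : Equiv.Perm (Fin n)) :
    Vexillary w ↔
      ¬ ∃ p q p' q' : Fin n, InEss w p q ∧ InEss w p' q' ∧ p < p' ∧ q < q' := by
  constructor
  · intro hv hpair
    obtain ⟨p, q, p', q', h1, h2, h3, h4⟩ := hpair
    exact hv (Stmt14.pair_to_pattern w p q p' q' h1 h2 h3 h4)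
  · intro h hpat
    obtain ⟨i, j, k, l, hij, hjk, hkl, h1, h2, h3⟩ := hpat
    exact h (Stmt14.pattern_to_pair w i j k l hij hjk hkl h1 h2 h3)
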